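/- Existence of a good choice of phases (kernel of Lieb's argument): let h be a Hermitian J×J complex matrix and let W : (Fin J)⁴ → ℂ satisfy W(i,j,k,l) = −W(j,i,k,l) = −W(i,j,l,k), conj(W(i,j,k,l)) = W(k,l,i,j), and W(i,j,i,j) ≥ 0 (real) for all indices. Then there exists θ ∈ [0,1]^J such that Re[ Σ_{n=1}^N ⟨g^θ_n, h g^θ_n⟩ + (1/2) Σ_{m,n=1}^N Σ_{i,j,k,l=1}^J conj(c^θ_{m,i}) conj(c^θ_{n,j}) c^θ_{m,k} c^θ_{n,l} W(i,j,k,l) ] ≤ Σ_{j=1}^J λ_j Re(h_{jj}) + (1/2) Σ_{i,j=1}^J λ_i λ_j W(i,j,i,j). -/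

import Mathlib

open MeasureTheory
open scoped Real

/-- The phase-modulated coefficients `c^θ_{n,j} := e^{2πiθ_j} G⁽ⁿ⁾_j`. -/
noncomputable def phaseCoeff {N J : ℕ} (G : Fin N → EuclideanSpace ℂ (Fin J))
    (θ : Fin J → ℝ) (n : Fin N) (j : Fin J) : ℂ :=
  Complex.exp (2 * π * Complex.I * (θ j : ℂ)) * G n j


/-! ### Auxiliary lemmas -/

lemma sum_exp_fin3 (a : ℤ) (ha : a.natAbs ≤ 2) :
    ∑ s : Fin 3, Complex.exp (2 * π * Complex.I * ((a : ℂ) * ((s : ℕ) : ℂ) / 3)) =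
      if a = 0 then 3 else 0 := by
  rcases eq_or_ne a 0 with h | h
  · simp [h, Fin.sum_univ_three]
  · set ω := Complex.exp (2 * π * Complex.I * ((a : ℂ) / 3)) with hω
    have hexp : ∀ s : Fin 3, Complex.exp (2 * π * Complex.I * ((a : ℂ) * ((s : ℕ) : ℂ) / 3))
        = ω ^ (s : ℕ) := by
      intro s
      rw [hω, ← Complex.exp_nat_mul]
      ring_nf
    have hω3 : ω ^ 3 = 1 := by
      rw [hω, ← Complex.exp_nat_mul]
      have : ((3 : ℕ) : ℂ) * (2 * ↑π * Complex.I * (↑a / 3)) = (a : ℂ) * (2 * ↑π * Complex.I) := by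
        push_cast; ring
      rw [this, Complex.exp_int_mul_two_pi_mul_I]
    have hω1 : ω ≠ 1 := by
      intro hcontra
      rw [hω, Complex.exp_eq_one_iff] at hcontra
      obtain ⟨n, hn⟩ := hcontra
      have h3 : (a : ℂ) = n * 3 := by
        have h2 : 2 * ↑π * Complex.I * ((a:ℂ) / 3) = 2 * ↑π * Complex.I * ((n * 3 : ℂ)/3) := by
          rw [hn]; ring
        have := mul_left_cancel₀ Complex.two_pi_I_ne_zero h2
        field_simp at this
        rw [mul_comm]; exact_mod_cast this
      have : a = n * 3 := by exact_mod_cast h3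
      omega
    have hsum : (ω - 1) * (1 + ω + ω ^ 2) = 0 := by
      have : (ω - 1) * (1 + ω + ω ^ 2) = ω ^ 3 - 1 := by ring
      rw [this, hω3, sub_self]
    have h0 : 1 + ω + ω ^ 2 = 0 := by
      rcases mul_eq_zero.mp hsum with h' | h'
      · exact absurd (sub_eq_zero.mp h') hω1
      · exact h'
    simp only [hexp, Fin.sum_univ_three]
    simp only [Fin.val_zero, Fin.val_one, Fin.val_two, pow_zero, pow_one]
    rw [if_neg h]
    linear_combination h0

lemma sum_phase {J : ℕ} (a : Fin J → ℤ) (ha : ∀ j, (a j).natAbs ≤ 2) :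
    ∑ t : Fin J → Fin 3,
        Complex.exp (2 * π * Complex.I * (∑ j, (a j : ℂ) * ((t j : ℕ) : ℂ) / 3))
      = if ∀ j, a j = 0 then (3 : ℂ) ^ J else 0 := by
  have hsplit : ∀ t : Fin J → Fin 3,
      Complex.exp (2 * π * Complex.I * (∑ j, (a j : ℂ) * ((t j : ℕ) : ℂ) / 3))
        = ∏ j, Complex.exp (2 * π * Complex.I * ((a j : ℂ) * ((t j : ℕ) : ℂ) / 3)) := by
    intro t
    rw [Finset.mul_sum, Complex.exp_sum]
  simp_rw [hsplit]
  have := (Finset.prod_univ_sum (fun _ : Fin J => (Finset.univ : Finset (Fin 3)))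
      (fun j s => Complex.exp (2 * π * Complex.I * ((a j : ℂ) * ((s : ℕ) : ℂ) / 3)))).symm
  rw [Fintype.piFinset_univ] at this
  rw [this]
  simp_rw [sum_exp_fin3 _ (ha _)]
  by_cases h : ∀ j, a j = 0
  · rw [if_pos h]
    simp [h]
  · rw [if_neg h]
    push_neg at h
    obtain ⟨j, hj⟩ := h
    exact Finset.prod_eq_zero (Finset.mem_univ j) (by simp [hj])

def aquad {J : ℕ} (j k : Fin J) : Fin J → ℤ := fun j' =>
  (if j' = k then 1 else 0) - (if j' = j then 1 else 0)

def aquart {J : ℕ} (i j k l : Fin J) : Fin J → ℤ := fun j' =>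
  (if j' = k then 1 else 0) + (if j' = l then 1 else 0)
    - (if j' = i then 1 else 0) - (if j' = j then 1 else 0)

lemma aquad_natAbs {J : ℕ} (j k : Fin J) (j' : Fin J) : ((aquad j k) j').natAbs ≤ 2 := by
  unfold aquad; split_ifs <;> decide

lemma aquart_natAbs {J : ℕ} (i j k l : Fin J) (j' : Fin J) :
    ((aquart i j k l) j').natAbs ≤ 2 := by
  unfold aquart; split_ifs <;> decide

lemma aquad_iff {J : ℕ} (j k : Fin J) : (∀ j', aquad j k j' = 0) ↔ j = k := by
  constructor
  · intro h
    by_contra hne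
    have hk := h k
    have : ¬ (k = j) := fun e => hne e.symm
    simp [aquad, this] at hk
  · rintro rfl j'
    simp [aquad]

lemma aquart_iff {J : ℕ} (i j k l : Fin J) :
    (∀ j', aquart i j k l j' = 0) ↔ ((k = i ∧ l = j) ∨ (k = j ∧ l = i)) := by
  constructor
  · intro h
    by_cases hki : k = i
    · subst hki
      left
      refine ⟨rfl, ?_⟩
      have hl := h l
      simp only [aquart] at hl
      split_ifs at hl <;> first | assumption | (exfalso; omega)
    · right
      have hik : ¬ (i = k) := fun e => hki e.symm
      have hi' := h i
      simp only [aquart, if_neg hik, if_pos rfl, if_true] at hi'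
      by_cases hil : i = l
      · rw [if_pos hil] at hi'
        by_cases hij : i = j
        · rw [if_pos hij] at hi'; exfalso; omega
        · rw [if_neg hij] at hi'
          have hj' := h j
          have hjl : ¬ (j = l) := fun e => hij (hil.trans e.symm)
          have hji : ¬ (j = i) := fun e => hij e.symm
          simp only [aquart, if_neg hjl, if_neg hji, if_pos rfl, if_true] at hj'
          by_cases hjk : j = k
          · exact ⟨hjk.symm, hil.symm⟩
          · rw [if_neg hjk] at hj'; exfalso; omega
      · rw [if_neg hil] at hi'
        exfalso
        by_cases hij : i = j
        · rw [if_pos hij] at hi'; omega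
        · rw [if_neg hij] at hi'; omega
  · rintro (⟨rfl, rfl⟩ | ⟨rfl, rfl⟩) j' <;> (unfold aquart; split_ifs <;> omega)

lemma aquad_sum {J : ℕ} (j k : Fin J) (t : Fin J → Fin 3) :
    ∑ j', ((aquad j k) j' : ℂ) * ((t j' : ℕ) : ℂ) / 3
      = ((t k : ℕ) : ℂ) / 3 - ((t j : ℕ) : ℂ) / 3 := by
  unfold aquad
  push_cast
  simp only [sub_mul, sub_div, Finset.sum_sub_distrib, ite_mul, one_mul, zero_mul]
  simp only [apply_ite (fun x : ℂ => x / 3), zero_div]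
  rw [Finset.sum_ite_eq' Finset.univ k (fun j' => ((t j' : ℕ) : ℂ) / 3),
      Finset.sum_ite_eq' Finset.univ j (fun j' => ((t j' : ℕ) : ℂ) / 3)]
  simp

lemma aquart_sum {J : ℕ} (i j k l : Fin J) (t : Fin J → Fin 3) :
    ∑ j', ((aquart i j k l) j' : ℂ) * ((t j' : ℕ) : ℂ) / 3
      = ((t k : ℕ) : ℂ) / 3 + ((t l : ℕ) : ℂ) / 3
        - ((t i : ℕ) : ℂ) / 3 - ((t j : ℕ) : ℂ) / 3 := by
  unfold aquart
  push_cast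
  simp only [sub_mul, add_mul, sub_div, add_div, Finset.sum_sub_distrib,
    Finset.sum_add_distrib, ite_mul, one_mul, zero_mul]
  simp only [apply_ite (fun x : ℂ => x / 3), zero_div]
  rw [Finset.sum_ite_eq' Finset.univ k (fun j' => ((t j' : ℕ) : ℂ) / 3),
      Finset.sum_ite_eq' Finset.univ l (fun j' => ((t j' : ℕ) : ℂ) / 3),
      Finset.sum_ite_eq' Finset.univ i (fun j' => ((t j' : ℕ) : ℂ) / 3),
      Finset.sum_ite_eq' Finset.univ j (fun j' => ((t j' : ℕ) : ℂ) / 3)]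
  simp

lemma conj_exp_phase (x : ℝ) :
    (starRingEnd ℂ) (Complex.exp (2 * π * Complex.I * (x : ℂ)))
      = Complex.exp (-(2 * π * Complex.I * (x : ℂ))) := by
  rw [← Complex.exp_conj]
  congr 1
  simp only [map_mul, Complex.conj_I, Complex.conj_ofReal, map_ofNat]
  ring

lemma term_quad {N J : ℕ} (G : Fin N → EuclideanSpace ℂ (Fin J)) (z : ℂ)
    (t : Fin J → Fin 3) (n : Fin N) (j k : Fin J) :
    (starRingEnd ℂ) (phaseCoeff G (fun j' => ((t j' : ℕ) : ℝ) / 3) n j) * z *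
      phaseCoeff G (fun j' => ((t j' : ℕ) : ℝ) / 3) n k
    = Complex.exp (2 * π * Complex.I * (∑ j', ((aquad j k) j' : ℂ) * ((t j' : ℕ) : ℂ) / 3))
        * ((starRingEnd ℂ) (G n j) * z * G n k) := by
  simp only [phaseCoeff]
  rw [map_mul, conj_exp_phase, aquad_sum]
  push_cast
  rw [show 2 * (π : ℂ) * Complex.I * (((t k : ℕ) : ℂ) / 3 - ((t j : ℕ) : ℂ) / 3)
        = 2 * (π : ℂ) * Complex.I * (((t k : ℕ) : ℂ) / 3)
          + -(2 * (π : ℂ) * Complex.I * (((t j : ℕ) : ℂ) / 3)) by ring,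
      Complex.exp_add]
  ring

lemma term_quart {N J : ℕ} (G : Fin N → EuclideanSpace ℂ (Fin J)) (z : ℂ)
    (t : Fin J → Fin 3) (m n : Fin N) (i j k l : Fin J) :
    (starRingEnd ℂ) (phaseCoeff G (fun j' => ((t j' : ℕ) : ℝ) / 3) m i)
      * (starRingEnd ℂ) (phaseCoeff G (fun j' => ((t j' : ℕ) : ℝ) / 3) n j)
      * phaseCoeff G (fun j' => ((t j' : ℕ) : ℝ) / 3) m k
      * phaseCoeff G (fun j' => ((t j' : ℕ) : ℝ) / 3) n l * z
    = Complex.exp (2 * π * Complex.I *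
          (∑ j', ((aquart i j k l) j' : ℂ) * ((t j' : ℕ) : ℂ) / 3))
        * ((starRingEnd ℂ) (G m i) * (starRingEnd ℂ) (G n j) * G m k * G n l * z) := by
  simp only [phaseCoeff]
  rw [map_mul, map_mul, conj_exp_phase, conj_exp_phase, aquart_sum]
  push_cast
  rw [show 2 * (π : ℂ) * Complex.I * (((t k : ℕ) : ℂ) / 3 + ((t l : ℕ) : ℂ) / 3
          - ((t i : ℕ) : ℂ) / 3 - ((t j : ℕ) : ℂ) / 3)
        = 2 * (π : ℂ) * Complex.I * (((t k : ℕ) : ℂ) / 3)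
          + (2 * (π : ℂ) * Complex.I * (((t l : ℕ) : ℂ) / 3)
          + (-(2 * (π : ℂ) * Complex.I * (((t i : ℕ) : ℂ) / 3))
          + -(2 * (π : ℂ) * Complex.I * (((t j : ℕ) : ℂ) / 3)))) by ring,
      Complex.exp_add, Complex.exp_add, Complex.exp_add]
  ring

lemma sum_ite_pair {J : ℕ} (i j : Fin J) (g : Fin J → Fin J → ℂ)
    (hg : i = j → ∀ k l, g k l = 0) :
    ∑ k, ∑ l, (if (k = i ∧ l = j) ∨ (k = j ∧ l = i) then g k l else 0)
      = g i j + g j i := by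
  by_cases hij : i = j
  · subst hij
    simp [hg rfl]
  · have hsplit : ∀ k l, (if (k = i ∧ l = j) ∨ (k = j ∧ l = i) then g k l else 0)
        = (if k = i ∧ l = j then g k l else 0) + (if k = j ∧ l = i then g k l else 0) := by
      intro k l
      by_cases h1 : k = i ∧ l = j <;> by_cases h2 : k = j ∧ l = i <;>
        simp [h1, h2] <;>
        first
          | exact absurd (h1.1.symm.trans h2.1) hij
          | (intro he; exact absurd he hij)
          | (intro he; exact absurd he.symm hij)
    simp_rw [hsplit, Finset.sum_add_distrib]
    have hone : ∀ (a b : Fin J), (∑ k, ∑ l, if k = a ∧ l = b then g k l else 0) = g a b := by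
      intro a b
      have hrow : ∀ k, (∑ l, if k = a ∧ l = b then g k l else 0)
          = if k = a then g k b else 0 := by
        intro k
        by_cases hk : k = a
        · subst hk
          simp [Finset.sum_ite_eq']
        · simp [hk]
      simp_rw [hrow]
      simp [Finset.sum_ite_eq']
    rw [hone i j, hone j i]

lemma sum_swap_mid {α β : Type*} [Fintype α] [Fintype β] (F : α → α → β → β → ℂ) :
    (∑ m, ∑ n, ∑ i, ∑ j, F m n i j) = ∑ i, ∑ j, ∑ m, ∑ n, F m n i j := by
  refine Eq.trans (Finset.sum_congr rfl fun m _ => Finset.sum_comm) ?_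
  refine Eq.trans (Finset.sum_congr rfl fun m _ =>
    Finset.sum_congr rfl fun i _ => Finset.sum_comm) ?_
  refine Eq.trans Finset.sum_comm ?_
  exact Finset.sum_congr rfl fun i _ => Finset.sum_comm

/-- **Existence of a good choice of phases** (kernel of Lieb's argument): there is some
`θ ∈ [0,1]^J` for which the energy of the phase-modulated Slater determinant is at most
`Σ_j λ_j Re h_{jj} + (1/2) Σ_{i,j} λ_i λ_j W(i,j,i,j)`. -/
theorem exists_good_phases (N J : ℕ) (hN : 0 < N) (hNJ : N ≤ J)
    (G : Fin N → EuclideanSpace ℂ (Fin J)) (hG : Orthonormal ℂ G)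
    (h : Matrix (Fin J) (Fin J) ℂ) (hh : h.IsHermitian)
    (W : Fin J → Fin J → Fin J → Fin J → ℂ)
    (hW1 : ∀ i j k l, W i j k l = - W j i k l)
    (hW2 : ∀ i j k l, W i j k l = - W i j l k)
    (hW3 : ∀ i j k l, (starRingEnd ℂ) (W i j k l) = W k l i j)
    (hW4 : ∀ i j, (W i j i j).im = 0 ∧ 0 ≤ (W i j i j).re) :
    ∃ θ ∈ Set.univ.pi fun _ : Fin J => Set.Icc (0 : ℝ) 1,
      ((∑ n : Fin N, ∑ j : Fin J, ∑ k : Fin J,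
          (starRingEnd ℂ) (phaseCoeff G θ n j) * h j k * phaseCoeff G θ n k)
        + (1 / 2) * ∑ m : Fin N, ∑ n : Fin N,
            ∑ i : Fin J, ∑ j : Fin J, ∑ k : Fin J, ∑ l : Fin J,
              (starRingEnd ℂ) (phaseCoeff G θ m i) * (starRingEnd ℂ) (phaseCoeff G θ n j)
                * phaseCoeff G θ m k * phaseCoeff G θ n l * W i j k l).re
      ≤ (∑ j : Fin J, (∑ n : Fin N, ‖G n j‖ ^ 2) * (h j j).re)
        + (1 / 2) * ∑ i : Fin J, ∑ j : Fin J,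
            (∑ n : Fin N, ‖G n i‖ ^ 2) * (∑ n : Fin N, ‖G n j‖ ^ 2) * (W i j i j).re := by
  classical
  have hWzero : ∀ i k l, W i i k l = 0 := by
    intro i k l
    have h1 := hW1 i i k l
    linear_combination h1 / 2
  -- the quadratic part averages
  have hA : ∑ t : Fin J → Fin 3,
      (∑ n : Fin N, ∑ j : Fin J, ∑ k : Fin J,
        (starRingEnd ℂ) (phaseCoeff G (fun j' => ((t j' : ℕ) : ℝ) / 3) n j) * h j k *
          phaseCoeff G (fun j' => ((t j' : ℕ) : ℝ) / 3) n k)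
      = (3 : ℂ) ^ J * ∑ n : Fin N, ∑ j : Fin J,
          (starRingEnd ℂ) (G n j) * h j j * G n j := by
    refine Eq.trans Finset.sum_comm ?_
    refine Eq.trans (Finset.sum_congr rfl fun n _ => Finset.sum_comm) ?_
    refine Eq.trans (Finset.sum_congr rfl fun n _ =>
      Finset.sum_congr rfl fun j _ => Finset.sum_comm) ?_
    rw [Finset.mul_sum]
    refine Finset.sum_congr rfl fun n _ => ?_
    rw [Finset.mul_sum]
    refine Finset.sum_congr rfl fun j _ => ?_
    have hterm : ∀ k : Fin J,
        (∑ t : Fin J → Fin 3,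
          (starRingEnd ℂ) (phaseCoeff G (fun j' => ((t j' : ℕ) : ℝ) / 3) n j) * h j k *
            phaseCoeff G (fun j' => ((t j' : ℕ) : ℝ) / 3) n k)
        = (if j = k then (3 : ℂ) ^ J else 0)
            * ((starRingEnd ℂ) (G n j) * h j k * G n k) := by
      intro k
      simp_rw [term_quad G (h j k)]
      rw [← Finset.sum_mul, sum_phase _ (aquad_natAbs j k)]
      simp only [aquad_iff]
    simp_rw [hterm]
    simp only [ite_mul, zero_mul]
    rw [Finset.sum_ite_eq]
    simp
  -- the quartic part averages
  have hB : ∑ t : Fin J → Fin 3,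
      (∑ m : Fin N, ∑ n : Fin N, ∑ i : Fin J, ∑ j : Fin J, ∑ k : Fin J, ∑ l : Fin J,
        (starRingEnd ℂ) (phaseCoeff G (fun j' => ((t j' : ℕ) : ℝ) / 3) m i)
          * (starRingEnd ℂ) (phaseCoeff G (fun j' => ((t j' : ℕ) : ℝ) / 3) n j)
          * phaseCoeff G (fun j' => ((t j' : ℕ) : ℝ) / 3) m k
          * phaseCoeff G (fun j' => ((t j' : ℕ) : ℝ) / 3) n l * W i j k l)
      = (3 : ℂ) ^ J * ∑ m : Fin N, ∑ n : Fin N, ∑ i : Fin J, ∑ j : Fin J,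
          ((starRingEnd ℂ) (G m i) * (starRingEnd ℂ) (G n j) * G m i * G n j * W i j i j
            + (starRingEnd ℂ) (G m i) * (starRingEnd ℂ) (G n j) * G m j * G n i * W i j j i) := by
    refine Eq.trans Finset.sum_comm ?_
    refine Eq.trans (Finset.sum_congr rfl fun m _ => Finset.sum_comm) ?_
    refine Eq.trans (Finset.sum_congr rfl fun m _ =>
      Finset.sum_congr rfl fun n _ => Finset.sum_comm) ?_
    refine Eq.trans (Finset.sum_congr rfl fun m _ => Finset.sum_congr rfl fun n _ =>
      Finset.sum_congr rfl fun i _ => Finset.sum_comm) ?_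
    refine Eq.trans (Finset.sum_congr rfl fun m _ => Finset.sum_congr rfl fun n _ =>
      Finset.sum_congr rfl fun i _ => Finset.sum_congr rfl fun j _ => Finset.sum_comm) ?_
    refine Eq.trans (Finset.sum_congr rfl fun m _ => Finset.sum_congr rfl fun n _ =>
      Finset.sum_congr rfl fun i _ => Finset.sum_congr rfl fun j _ =>
        Finset.sum_congr rfl fun k _ => Finset.sum_comm) ?_
    rw [Finset.mul_sum]
    refine Finset.sum_congr rfl fun m _ => ?_
    rw [Finset.mul_sum]
    refine Finset.sum_congr rfl fun n _ => ?_
    rw [Finset.mul_sum]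
    refine Finset.sum_congr rfl fun i _ => ?_
    rw [Finset.mul_sum]
    refine Finset.sum_congr rfl fun j _ => ?_
    have hterm : ∀ k l : Fin J,
        (∑ t : Fin J → Fin 3,
          (starRingEnd ℂ) (phaseCoeff G (fun j' => ((t j' : ℕ) : ℝ) / 3) m i)
            * (starRingEnd ℂ) (phaseCoeff G (fun j' => ((t j' : ℕ) : ℝ) / 3) n j)
            * phaseCoeff G (fun j' => ((t j' : ℕ) : ℝ) / 3) m k
            * phaseCoeff G (fun j' => ((t j' : ℕ) : ℝ) / 3) n l * W i j k l)
        = (if (k = i ∧ l = j) ∨ (k = j ∧ l = i) then (3 : ℂ) ^ J else 0)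
            * ((starRingEnd ℂ) (G m i) * (starRingEnd ℂ) (G n j) * G m k * G n l
              * W i j k l) := by
      intro k l
      simp_rw [term_quart G (W i j k l)]
      rw [← Finset.sum_mul, sum_phase _ (aquart_natAbs i j k l)]
      simp only [aquart_iff]
    simp_rw [hterm]
    have hsw : ∀ k l : Fin J,
        (if (k = i ∧ l = j) ∨ (k = j ∧ l = i) then (3 : ℂ) ^ J else 0)
            * ((starRingEnd ℂ) (G m i) * (starRingEnd ℂ) (G n j) * G m k * G n l
              * W i j k l)
        = (3 : ℂ) ^ J * (if (k = i ∧ l = j) ∨ (k = j ∧ l = i) then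
            (starRingEnd ℂ) (G m i) * (starRingEnd ℂ) (G n j) * G m k * G n l
              * W i j k l else 0) := by
      intro k l; split_ifs <;> ring
    simp_rw [hsw, ← Finset.mul_sum]
    congr 1
    refine sum_ite_pair i j _ (fun hij k l => ?_)
    have hw0 : W i j k l = 0 := by rw [← hij]; exact hWzero i k l
    rw [hw0, mul_zero]
  -- get a good point from the average
  obtain ⟨t, -, ht⟩ : ∃ t ∈ (Finset.univ : Finset (Fin J → Fin 3)),
      ((∑ n : Fin N, ∑ j : Fin J, ∑ k : Fin J,
          (starRingEnd ℂ) (phaseCoeff G (fun j' => ((t j' : ℕ) : ℝ) / 3) n j) * h j k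
            * phaseCoeff G (fun j' => ((t j' : ℕ) : ℝ) / 3) n k)
        + (1 / 2) * ∑ m : Fin N, ∑ n : Fin N,
            ∑ i : Fin J, ∑ j : Fin J, ∑ k : Fin J, ∑ l : Fin J,
              (starRingEnd ℂ) (phaseCoeff G (fun j' => ((t j' : ℕ) : ℝ) / 3) m i)
                * (starRingEnd ℂ) (phaseCoeff G (fun j' => ((t j' : ℕ) : ℝ) / 3) n j)
                * phaseCoeff G (fun j' => ((t j' : ℕ) : ℝ) / 3) m k
                * phaseCoeff G (fun j' => ((t j' : ℕ) : ℝ) / 3) n l * W i j k l).re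
      ≤ (∑ j : Fin J, (∑ n : Fin N, ‖G n j‖ ^ 2) * (h j j).re)
        + (1 / 2) * ∑ i : Fin J, ∑ j : Fin J,
            (∑ n : Fin N, ‖G n i‖ ^ 2) * (∑ n : Fin N, ‖G n j‖ ^ 2) * (W i j i j).re := by
    apply Finset.exists_le_of_sum_le Finset.univ_nonempty
    rw [← Complex.re_sum]
    rw [Finset.sum_add_distrib, ← Finset.mul_sum, hA, hB]
    set E1c := ∑ n : Fin N, ∑ j : Fin J, (starRingEnd ℂ) (G n j) * h j j * G n j with hE1c
    set E2c := ∑ m : Fin N, ∑ n : Fin N, ∑ i : Fin J, ∑ j : Fin J,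
      ((starRingEnd ℂ) (G m i) * (starRingEnd ℂ) (G n j) * G m i * G n j * W i j i j
        + (starRingEnd ℂ) (G m i) * (starRingEnd ℂ) (G n j) * G m j * G n i * W i j j i)
      with hE2c
    rw [Finset.sum_const, Finset.card_univ]
    have hcard : Fintype.card (Fin J → Fin 3) = 3 ^ J := by
      rw [Fintype.card_fun, Fintype.card_fin, Fintype.card_fin]
    rw [hcard, nsmul_eq_mul]
    have hre : ((3 : ℂ) ^ J * E1c + 1 / 2 * ((3 : ℂ) ^ J * E2c)).re
        = (3 : ℝ) ^ J * (E1c.re + (1 / 2) * E2c.re) := by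
      have hcast : (3 : ℂ) ^ J * E1c + 1 / 2 * ((3 : ℂ) ^ J * E2c)
          = (((3 : ℝ) ^ J : ℝ) : ℂ) * (E1c + (((1 / 2 : ℝ)) : ℂ) * E2c) := by
        push_cast; ring
      rw [hcast, Complex.re_ofReal_mul, Complex.add_re, Complex.re_ofReal_mul]
    rw [hre]
    have hcast2 : ((3 ^ J : ℕ) : ℝ) = (3 : ℝ) ^ J := by push_cast; ring
    rw [hcast2]
    apply mul_le_mul_of_nonneg_left _ (by positivity)
    have hx : ∀ (a : ℂ), (starRingEnd ℂ) a * a = ((‖a‖ ^ 2 : ℝ) : ℂ) := by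
      intro a; rw [mul_comm, Complex.mul_conj', Complex.ofReal_pow]
    have hE1 : E1c.re = ∑ j : Fin J, (∑ n : Fin N, ‖G n j‖ ^ 2) * (h j j).re := by
      rw [hE1c, Complex.re_sum]
      simp_rw [Complex.re_sum]
      have hterm : ∀ (a z : ℂ), ((starRingEnd ℂ) a * z * a).re = ‖a‖ ^ 2 * z.re := by
        intro a z
        have h1 : (starRingEnd ℂ) a * z * a = (a * (starRingEnd ℂ) a) * z := by ring
        rw [h1, Complex.mul_conj', ← Complex.ofReal_pow, Complex.re_ofReal_mul]
      simp_rw [hterm]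
      exact Finset.sum_comm.trans
        (Finset.sum_congr rfl fun j _ => (Finset.sum_mul _ _ _).symm)
    have hE2 : E2c.re ≤ ∑ i : Fin J, ∑ j : Fin J,
        (∑ n : Fin N, ‖G n i‖ ^ 2) * (∑ n : Fin N, ‖G n j‖ ^ 2) * (W i j i j).re := by
      rw [hE2c, sum_swap_mid, Complex.re_sum]
      refine Finset.sum_le_sum fun i _ => ?_
      rw [Complex.re_sum]
      refine Finset.sum_le_sum fun j _ => ?_
      have hval1 : (((∑ n : Fin N, ‖G n i‖ ^ 2 : ℝ)) : ℂ)
            * (((∑ n : Fin N, ‖G n j‖ ^ 2 : ℝ)) : ℂ) * W i j i j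
          = ∑ m : Fin N, ∑ n : Fin N,
              (starRingEnd ℂ) (G m i) * (starRingEnd ℂ) (G n j) * G m i * G n j
                * W i j i j := by
        rw [Complex.ofReal_sum, Complex.ofReal_sum, Finset.sum_mul_sum, Finset.sum_mul]
        refine Finset.sum_congr rfl fun m _ => ?_
        rw [Finset.sum_mul]
        refine Finset.sum_congr rfl fun n _ => ?_
        rw [← hx (G m i), ← hx (G n j)]
        ring
      set P := ∑ m : Fin N, (starRingEnd ℂ) (G m i) * G m j with hPdef
      have hconjP : (starRingEnd ℂ) P = ∑ n : Fin N, (starRingEnd ℂ) (G n j) * G n i := by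
        rw [hPdef, map_sum]
        refine Finset.sum_congr rfl fun n _ => ?_
        rw [map_mul, Complex.conj_conj]
        ring
      have hval2 : (∑ m : Fin N, ∑ n : Fin N,
            (starRingEnd ℂ) (G m i) * (starRingEnd ℂ) (G n j) * G m j * G n i
              * W i j j i)
          = -(((Complex.normSq P : ℝ)) : ℂ) * W i j i j := by
        have h1 : P * ((starRingEnd ℂ) P) * W i j j i
            = ∑ m : Fin N, ∑ n : Fin N,
                (starRingEnd ℂ) (G m i) * (starRingEnd ℂ) (G n j) * G m j * G n i
                  * W i j j i := by
          rw [hconjP, hPdef, Finset.sum_mul_sum, Finset.sum_mul]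
          refine Finset.sum_congr rfl fun m _ => ?_
          rw [Finset.sum_mul]
          refine Finset.sum_congr rfl fun n _ => ?_
          ring
        rw [← h1, Complex.mul_conj, hW2 i j j i]
        ring
      simp only [Finset.sum_add_distrib]
      rw [← hval1, hval2]
      rw [Complex.add_re, ← Complex.ofReal_mul, Complex.re_ofReal_mul,
        neg_mul, Complex.neg_re, Complex.re_ofReal_mul]
      have h1 := Complex.normSq_nonneg P
      have h2 := (hW4 i j).2
      nlinarith [mul_nonneg h1 h2]
    rw [hE1]
    exact add_le_add le_rfl (mul_le_mul_of_nonneg_left hE2 (by norm_num))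
  exact ⟨fun j' => ((t j' : ℕ) : ℝ) / 3, by
    intro j' _
    constructor
    · positivity
    · rw [div_le_one (by norm_num)]
      have h3 : ((t j' : ℕ) : ℝ) < 3 := by exact_mod_cast (t j').isLt
      linarith, ht⟩
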